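/- Let G be a finite abelian p-group, F a field of characteristic p, and let m, n be non-negative integers. Then Δ(F ℧_m(Ω_n(G)))·FG = ℧_m(Ω_n(FG))·FG, i.e. the ideal of FG generated by { g^{p^m} − 1 : g ∈ G, g^{p^n} = 1 } equals the ideal generated by the p^m-th powers of the elements x ∈ FG with x^{p^n} = 0. -/

import Mathlib

theorem aug_ideal_power_omega_eq
    (p : ℕ) [Fact p.Prime] (F : Type*) [Field F] [CharP F p]
    (G : Type*) [CommGroup G] [Finite G] (hG : IsPGroup p G)
    (m n : ℕ) :
    Ideal.span {a : MonoidAlgebra F G |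
        ∃ k ∈ Subgroup.closure {x : G | ∃ g : G, g ^ (p ^ n) = 1 ∧ x = g ^ (p ^ m)},
          a = MonoidAlgebra.of F G k - 1} =
      Ideal.span {a : MonoidAlgebra F G |
        ∃ x : MonoidAlgebra F G, x ^ (p ^ n) = 0 ∧ a = x ^ (p ^ m)} := by
  haveI : CharP (MonoidAlgebra F G) p := charP_of_injective_algebraMap' F p
  have hp : p.Prime := Fact.out
  have hpn0 : ∀ k : ℕ, (0 : F) ^ (p ^ k) = 0 := fun k =>
    zero_pow (pow_ne_zero _ hp.ne_zero)
  set S : Set G := {x : G | ∃ g : G, g ^ (p ^ n) = 1 ∧ x = g ^ (p ^ m)} with hS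
  set I := Ideal.span {a : MonoidAlgebra F G | ∃ k ∈ Subgroup.closure S,
      a = MonoidAlgebra.of F G k - 1} with hI
  set J := Ideal.span {a : MonoidAlgebra F G |
      ∃ x : MonoidAlgebra F G, x ^ (p ^ n) = 0 ∧ a = x ^ (p ^ m)} with hJ
  apply le_antisymm
  · rw [hI, Ideal.span_le]
    rintro a ⟨k, hk, rfl⟩
    induction hk using Subgroup.closure_induction with
    | mem x hx =>
      obtain ⟨g, hg, rfl⟩ := hx
      apply Ideal.subset_span
      refine ⟨MonoidAlgebra.of F G g - 1, ?_, ?_⟩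
      · rw [sub_pow_char_pow, one_pow, ← map_pow, hg, map_one, sub_self]
      · rw [sub_pow_char_pow, one_pow, ← map_pow]
    | one => rw [map_one, sub_self]; exact zero_mem J
    | mul x y hx hy ihx ihy =>
      have : (MonoidAlgebra.of F G (x * y) - 1 : MonoidAlgebra F G)
          = (MonoidAlgebra.of F G x - 1) * MonoidAlgebra.of F G y
            + (MonoidAlgebra.of F G y - 1) := by
        rw [map_mul]; ring
      rw [this]
      exact add_mem (Ideal.mul_mem_right _ _ ihx) ihy
    | inv x hx ihx =>
      have : (MonoidAlgebra.of F G x⁻¹ - 1 : MonoidAlgebra F G)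
          = -((MonoidAlgebra.of F G x - 1) * MonoidAlgebra.of F G x⁻¹) := by
        rw [← neg_mul, neg_sub, sub_mul, one_mul, ← map_mul, mul_inv_cancel, map_one]
      rw [this]
      exact neg_mem (Ideal.mul_mem_right _ _ ihx)
  · rw [hJ, Ideal.span_le]
    rintro a ⟨x, hxn, rfl⟩
    -- the subgroup H = Ω_n(G)
    set H : Subgroup G := {
      carrier := {g : G | g ^ (p ^ n) = 1}
      one_mem' := one_pow _
      mul_mem' := by
        intro a b ha hb
        simp only [Set.mem_setOf_eq] at *
        rw [mul_pow, ha, hb, one_mul]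
      inv_mem' := by
        intro a ha
        simp only [Set.mem_setOf_eq] at *
        rw [inv_pow, ha, inv_one] } with hH
    have hmemH : ∀ g : G, g ∈ H ↔ g ^ (p ^ n) = 1 := fun g => Iff.rfl
    -- generators of I
    have hgen : ∀ g : G, g ∈ H →
        (MonoidAlgebra.of F G (g ^ (p ^ m)) - 1 : MonoidAlgebra F G) ∈ I := by
      intro g hg
      apply Ideal.subset_span
      exact ⟨g ^ (p ^ m), Subgroup.subset_closure ⟨g, hg, rfl⟩, rfl⟩
    set π : MonoidAlgebra F G →+* MonoidAlgebra F G ⧸ I := Ideal.Quotient.mk I with hπ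
    -- φ : G ⧸ H → FG/I, g ↦ π (of (g ^ p^m)), well-defined
    have hwd : ∀ (g g' : G), (QuotientGroup.leftRel H) g g' →
        π (MonoidAlgebra.of F G (g ^ (p ^ m))) = π (MonoidAlgebra.of F G (g' ^ (p ^ m))) := by
      intro g g' hgg
      rw [QuotientGroup.leftRel_apply] at hgg
      have key : (MonoidAlgebra.of F G (g' ^ (p ^ m)) - MonoidAlgebra.of F G (g ^ (p ^ m))
          : MonoidAlgebra F G)
          = MonoidAlgebra.of F G (g ^ (p ^ m)) *
            (MonoidAlgebra.of F G ((g⁻¹ * g') ^ (p ^ m)) - 1) := by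
        rw [mul_sub, mul_one, ← map_mul, ← mul_pow, mul_inv_cancel_left]
      have h2 : π (MonoidAlgebra.of F G (g' ^ (p ^ m)) - MonoidAlgebra.of F G (g ^ (p ^ m))) = 0 := by
        rw [key, Ideal.Quotient.eq_zero_iff_mem]
        exact Ideal.mul_mem_left _ _ (hgen _ hgg)
      rw [map_sub, sub_eq_zero] at h2
      exact h2.symm
    set φ : G ⧸ H → MonoidAlgebra F G ⧸ I :=
      Quotient.lift (fun g => π (MonoidAlgebra.of F G (g ^ (p ^ m)))) hwd with hφ
    have hφmk : ∀ g : G, φ (QuotientGroup.mk g) = π (MonoidAlgebra.of F G (g ^ (p ^ m))) :=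
      fun g => rfl
    -- x^(p^k) as a sum of singles
    have hxpow : ∀ k : ℕ, x ^ (p ^ k)
        = ∑ g ∈ x.coeff.support, MonoidAlgebra.single (g ^ (p ^ k)) ((x.coeff g) ^ (p ^ k)) := by
      intro k
      conv_lhs => rw [← MonoidAlgebra.sum_coeff_single x, Finsupp.sum]
      rw [sum_pow_char_pow]
      exact Finset.sum_congr rfl fun g _ => MonoidAlgebra.single_pow _ _ _
    -- Frobenius iterates are injective on F
    have hfrobinj : ∀ k : ℕ, Function.Injective (fun a : F => a ^ (p ^ k)) := by
      intro k
      have := (iterateFrobenius F p k).injective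
      intro a b h
      exact this (by simpa [iterateFrobenius_def] using h)
    -- ψ : G⧸H → G, ḡ ↦ g^(p^n), injective
    have hwdψ : ∀ (g g' : G), (QuotientGroup.leftRel H) g g' → g ^ (p ^ n) = g' ^ (p ^ n) := by
      intro g g' hgg
      rw [QuotientGroup.leftRel_apply] at hgg
      have h1 : (g⁻¹ * g') ^ (p ^ n) = 1 := hgg
      rw [mul_pow, inv_pow, inv_mul_eq_one] at h1
      exact h1
    set ψ : G ⧸ H → G := Quotient.lift (fun g => g ^ (p ^ n)) hwdψ with hψ
    have hψmk : ∀ g : G, ψ (QuotientGroup.mk g) = g ^ (p ^ n) := fun g => rfl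
    have hψinj : Function.Injective ψ := by
      intro t t'
      induction t using Quotient.ind with | _ g =>
      induction t' using Quotient.ind with | _ g' =>
      intro h
      rw [hψmk, hψmk] at h
      have : (g⁻¹ * g') ^ (p ^ n) = 1 := by
        rw [mul_pow, inv_pow, h, inv_mul_cancel]
      exact (QuotientGroup.eq (s := H)).mpr this
    -- the pushforward of x's coefficients to G⧸H vanishes
    have hy : Finsupp.mapDomain (QuotientGroup.mk : G → G ⧸ H) x.coeff = 0 := by
      set c : G →₀ F := Finsupp.mapRange (fun a => a ^ (p ^ n)) (hpn0 n) x.coeff with hc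
      have h1 : Finsupp.mapDomain (fun g : G => g ^ (p ^ n)) c = 0 := by
        rw [hc, Finsupp.mapDomain]
        rw [Finsupp.sum_mapRange_index (fun a => Finsupp.single_zero _)]
        rw [Finsupp.sum]
        have := congrArg MonoidAlgebra.coeff (hxpow n)
        rw [hxn, MonoidAlgebra.coeff_sum] at this
        exact this.symm
      have h2 : Finsupp.mapDomain ψ (Finsupp.mapDomain (QuotientGroup.mk : G → G ⧸ H) c) = 0 := by
        rw [← Finsupp.mapDomain_comp]
        have : (ψ ∘ (QuotientGroup.mk : G → G ⧸ H)) = fun g : G => g ^ (p ^ n) := by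
          funext g; exact hψmk g
        rw [this, h1]
      have h3 : Finsupp.mapDomain (QuotientGroup.mk : G → G ⧸ H) c = 0 :=
        Finsupp.mapDomain_injective hψinj (by rw [h2, Finsupp.mapDomain_zero])
      have h4 : Finsupp.mapRange (fun a : F => a ^ (p ^ n)) (hpn0 n)
          (Finsupp.mapDomain (QuotientGroup.mk : G → G ⧸ H) x.coeff) = 0 := by
        have e := Finsupp.mapDomain_mapRange (QuotientGroup.mk : G → G ⧸ H) x.coeff
          (fun a : F => a ^ (p ^ n)) (hpn0 n) (fun a b => add_pow_char_pow a b p n)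
        rw [← e]; exact h3
      have h5 := Finsupp.mapRange_injective (α := G ⧸ H) (fun a : F => a ^ (p ^ n))
        (hpn0 n) (hfrobinj n)
      apply h5
      rw [h4, Finsupp.mapRange_zero]
    -- conclude: π (x ^ p^m) = 0
    show x ^ (p ^ m) ∈ I
    rw [← Ideal.Quotient.eq_zero_iff_mem]
    show π (x ^ (p ^ m)) = 0
    set T : G ⧸ H → F → MonoidAlgebra F G ⧸ I :=
      fun t b => π (MonoidAlgebra.single 1 b) * φ t with hT
    have hT0 : ∀ t, T t 0 = 0 := by
      intro t
      rw [hT]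
      simp only [Finsupp.single_zero, MonoidAlgebra.single_zero, map_zero, zero_mul]
    have hTadd : ∀ t b₁ b₂, T t (b₁ + b₂) = T t b₁ + T t b₂ := by
      intro t b₁ b₂
      rw [hT]
      simp only [Finsupp.single_add, MonoidAlgebra.single_add, map_add, add_mul]
    set c : G →₀ F := Finsupp.mapRange (fun a => a ^ (p ^ m)) (hpn0 m) x.coeff with hc
    have step1 : π (x ^ (p ^ m)) = x.coeff.sum fun g b => T (QuotientGroup.mk g) (b ^ (p ^ m)) := by
      rw [hxpow m, map_sum, Finsupp.sum]
      refine Finset.sum_congr rfl fun g _ => ?_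
      show π (MonoidAlgebra.single (g ^ (p ^ m)) ((x.coeff g) ^ (p ^ m)))
          = π (MonoidAlgebra.single 1 ((x.coeff g) ^ (p ^ m))) * φ (QuotientGroup.mk g)
      rw [hφmk, ← map_mul]
      congr 1
      rw [MonoidAlgebra.of_apply, MonoidAlgebra.single_mul_single, one_mul, mul_one]
    have step2 : x.coeff.sum (fun g b => T (QuotientGroup.mk g) (b ^ (p ^ m)))
        = c.sum fun g b => T (QuotientGroup.mk g) b := by
      rw [hc, Finsupp.sum_mapRange_index (fun g => hT0 _)]
    have step3 : c.sum (fun g b => T (QuotientGroup.mk g) b)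
        = (Finsupp.mapDomain (QuotientGroup.mk : G → G ⧸ H) c).sum T :=
      (Finsupp.sum_mapDomain_index (fun t => hT0 t) (fun t b₁ b₂ => hTadd t b₁ b₂)).symm
    have step4 : Finsupp.mapDomain (QuotientGroup.mk : G → G ⧸ H) c = 0 := by
      have e := Finsupp.mapDomain_mapRange (QuotientGroup.mk : G → G ⧸ H) x.coeff
        (fun a : F => a ^ (p ^ m)) (hpn0 m) (fun a b => add_pow_char_pow a b p m)
      rw [hc, e, hy, Finsupp.mapRange_zero]
    rw [step1, step2, step3, step4, Finsupp.sum_zero_index]
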